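/- arXiv:2108.09831 — 4 statements merged into one kernel-verified Lean document; each statement's English description precedes it below -/
import Mathlib

section
/- For every pair of indices 1 ≤ k ≤ ℓ ≤ N there exists a unique ψ^{kℓ} ∈ Ṽ^N such that a(ψ^{kℓ}, η) = 0 for all η ∈ T_φ and (ψ^{kℓ}, φ^{ij})_H = δ_{ik}δ_{jℓ} for all 1 ≤ i ≤ j ≤ N. -/
open scoped RealInnerProductSpace

/-- Multiplication of a tuple by a matrix from the right: `(vS)_j = Σ_i S_{ij} v_i`. -/
def smulMat {N : ℕ} {V : Type*} [AddCommGroup V] [Module ℝ V]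
    (v : Fin N → V) (S : Matrix (Fin N) (Fin N) ℝ) : Fin N → V :=
  fun j => ∑ i, S i j • v i

/-- The normalized symmetric matrices `S^{ij}`: `S^{ii} = e_i e_iᵀ` and, for `i ≠ j`,
`S^{ij} = (e_i e_jᵀ + e_j e_iᵀ)/√2`. -/
noncomputable def SijMat {N : ℕ} (i j : Fin N) : Matrix (Fin N) (Fin N) ℝ :=
  if i = j then Matrix.single i i 1
  else (Real.sqrt 2)⁻¹ • (Matrix.single i j 1 + Matrix.single j i 1)

/-- The outer product of tuples in `Ṽ^N`, computed in `H₀` through the embedding `ι`. -/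
noncomputable def outerProdI {N : ℕ} {V H₀ : Type*} [NormedAddCommGroup V]
    [NormedAddCommGroup H₀] [InnerProductSpace ℝ H₀] [NormedSpace ℝ V]
    (ι : V →L[ℝ] H₀) (v w : Fin N → V) : Matrix (Fin N) (Fin N) ℝ :=
  Matrix.of fun i j => ⟪ι (v i), ι (w j)⟫

/-- The inner product `(v,w)_H = tr⟦v,w⟧`, computed in `H₀` through the embedding `ι`. -/
noncomputable def innerHI {N : ℕ} {V H₀ : Type*} [NormedAddCommGroup V]
    [NormedAddCommGroup H₀] [InnerProductSpace ℝ H₀] [NormedSpace ℝ V]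
    (ι : V →L[ℝ] H₀) (v w : Fin N → V) : ℝ :=
  ∑ j, ⟪ι (v j), ι (w j)⟫

/-! ### Auxiliary matrix computations -/

lemma sum_std {N : ℕ} (p q : Fin N) (M : Fin N → Fin N → ℝ) :
    ∑ j, ∑ i, Matrix.single p q (1:ℝ) i j * M i j = M p q := by
  simp [Matrix.single, Matrix.of_apply, ite_and, Finset.sum_ite_eq, Finset.mul_sum]

lemma sum_Sii {N : ℕ} (a : Fin N) (M : Fin N → Fin N → ℝ) :
    ∑ j, ∑ i, SijMat a a i j * M i j = M a a := by
  simp only [SijMat, if_pos rfl]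
  exact sum_std a a M

lemma sum_Sij {N : ℕ} {a b : Fin N} (hab : a ≠ b) (M : Fin N → Fin N → ℝ) :
    ∑ j, ∑ i, SijMat a b i j * M i j = (Real.sqrt 2)⁻¹ * (M a b + M b a) := by
  simp only [SijMat, if_neg hab, Matrix.smul_apply, Matrix.add_apply, smul_eq_mul, add_mul,
    mul_assoc, ← Finset.mul_sum, Finset.sum_add_distrib]
  rw [sum_std, sum_std]

lemma SijMat_symm {N : ℕ} (i j a b : Fin N) : SijMat i j a b = SijMat i j b a := by
  by_cases h : i = j <;>
    simp only [SijMat, h, if_pos, if_neg, Matrix.smul_apply, Matrix.add_apply,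
      Matrix.single, Matrix.of_apply, reduceIte] <;>
  · by_cases h1 : i = a <;> by_cases h2 : j = b <;> by_cases h3 : i = b <;> by_cases h4 : j = a <;>
      simp_all

lemma frob_Sij {N : ℕ} {a b k ℓ : Fin N} (hab : a ≤ b) (hkl : k ≤ ℓ) :
    ∑ j, ∑ i, SijMat a b i j * SijMat k ℓ i j
      = (if a = k then (1:ℝ) else 0) * (if b = ℓ then (1:ℝ) else 0) := by
  have s2 : Real.sqrt 2 * Real.sqrt 2 = 2 := Real.mul_self_sqrt (by norm_num)
  rcases eq_or_lt_of_le hab with rfl | hab' <;> rcases eq_or_lt_of_le hkl with rfl | hkl'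
  · rw [sum_Sii (M := fun i j => SijMat k k i j)]
    simp only [SijMat, if_pos rfl, Matrix.single, Matrix.of_apply]
    by_cases h : a = k <;> simp [h, eq_comm]
  · rw [sum_Sii (M := fun i j => SijMat k ℓ i j)]
    have hkl'' : k ≠ ℓ := ne_of_lt hkl'
    simp only [SijMat, if_neg hkl'', Matrix.smul_apply, Matrix.add_apply,
      Matrix.single, Matrix.of_apply, smul_eq_mul]
    by_cases h1 : k = a <;> by_cases h2 : ℓ = a <;> simp_all [eq_comm]
  · have hab'' : a ≠ b := ne_of_lt hab'
    rw [sum_Sij hab'' (M := fun i j => SijMat k k i j)]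
    simp only [SijMat, if_pos rfl, Matrix.single, Matrix.of_apply]
    by_cases h1 : k = a <;> by_cases h2 : k = b <;> simp_all [eq_comm]
  · have hab'' : a ≠ b := ne_of_lt hab'
    have hkl'' : k ≠ ℓ := ne_of_lt hkl'
    rw [sum_Sij hab'' (M := fun i j => SijMat k ℓ i j)]
    simp only [SijMat, if_neg hkl'', Matrix.smul_apply, Matrix.add_apply,
      Matrix.single, Matrix.of_apply, smul_eq_mul]
    have h1 : ¬(ℓ = a ∧ k = b) := by
      rintro ⟨rfl, rfl⟩; exact absurd (hab'.trans hkl') (lt_irrefl _)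
    have h2 : ¬(k = b ∧ ℓ = a) := fun h => h1 ⟨h.2, h.1⟩
    rw [if_neg h1, if_neg h2, add_zero, zero_add]
    have h3 : (if ℓ = b ∧ k = a then (1:ℝ) else 0) = if k = a ∧ ℓ = b then 1 else 0 := by
      rw [if_congr (and_comm (a := ℓ = b) (b := k = a)) rfl rfl]
    rw [h3]
    have h4 : (if a = k then (1:ℝ) else 0) * (if b = ℓ then (1:ℝ) else 0)
        = if k = a ∧ ℓ = b then 1 else 0 := by
      by_cases h5 : a = k <;> by_cases h6 : b = ℓ <;> simp_all [eq_comm]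
    rw [h4]
    set c := if k = a ∧ ℓ = b then (1:ℝ) else 0
    have hc : (Real.sqrt 2)⁻¹ * ((Real.sqrt 2)⁻¹ * c + (Real.sqrt 2)⁻¹ * c)
        = (Real.sqrt 2 * Real.sqrt 2)⁻¹ * (2 * c) := by ring
    rw [hc, s2]; ring

/-! ### Auxiliary inner product computations -/

section InnerAux

variable {N : ℕ} {V H₀ : Type*} [NormedAddCommGroup V] [InnerProductSpace ℝ V]
  [NormedAddCommGroup H₀] [InnerProductSpace ℝ H₀]
  (ι : V →L[ℝ] H₀) (φ : Fin N → V)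

lemma innerHI_smulMat (w : Fin N → V) (S : Matrix (Fin N) (Fin N) ℝ) :
    innerHI ι w (smulMat φ S) = ∑ j, ∑ i, S i j * ⟪ι (w j), ι (φ i)⟫ := by
  unfold innerHI smulMat
  congr 1; funext j
  rw [map_sum, inner_sum]
  congr 1; funext i
  rw [map_smul, real_inner_smul_right]

lemma innerHI_skew (w : Fin N → V) (S : Matrix (Fin N) (Fin N) ℝ)
    (hS : ∀ a b, S a b = S b a)
    (hw : ∀ a b, ⟪ι (w a), ι (φ b)⟫ + ⟪ι (φ a), ι (w b)⟫ = 0) :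
    innerHI ι w (smulMat φ S) = 0 := by
  rw [innerHI_smulMat]
  have hskew : ∀ a b, ⟪ι (w a), ι (φ b)⟫ = - ⟪ι (w b), ι (φ a)⟫ := by
    intro a b
    have h := hw b a
    have hc : ⟪ι (φ b), ι (w a)⟫ = ⟪ι (w a), ι (φ b)⟫ := real_inner_comm _ _
    linarith
  have h1 : ∑ j, ∑ i, S i j * ⟪ι (w j), ι (φ i)⟫
      = - ∑ j, ∑ i, S i j * ⟪ι (w i), ι (φ j)⟫ := by
    rw [← Finset.sum_neg_distrib]
    congr 1; funext j
    rw [← Finset.sum_neg_distrib]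
    congr 1; funext i
    rw [hskew j i]; ring
  have h2 : ∑ j, ∑ i, S i j * ⟪ι (w i), ι (φ j)⟫
      = ∑ j, ∑ i, S i j * ⟪ι (w j), ι (φ i)⟫ := by
    rw [Finset.sum_comm]
    congr 1; funext j; congr 1; funext i; rw [hS i j]
  linarith [h1, h2]

lemma inner_smulMat_phi (hφ : outerProdI ι φ φ = 1) (S : Matrix (Fin N) (Fin N) ℝ)
    (i j : Fin N) : ⟪ι ((smulMat φ S) j), ι (φ i)⟫ = S i j := by
  have hφ' : ∀ a b, ⟪ι (φ a), ι (φ b)⟫ = if a = b then (1:ℝ) else 0 := by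
    intro a b
    have := congrFun (congrFun hφ a) b
    simpa [outerProdI, Matrix.one_apply] using this
  unfold smulMat
  rw [map_sum, sum_inner]
  simp only [map_smul, real_inner_smul_left, hφ']
  simp [Finset.sum_ite_eq, Finset.mul_sum]

lemma innerHI_sub (u w r : Fin N → V) :
    innerHI ι (fun m => u m - w m) r = innerHI ι u r - innerHI ι w r := by
  unfold innerHI
  rw [← Finset.sum_sub_distrib]
  refine Finset.sum_congr rfl fun m _ => ?_
  rw [map_sub, inner_sub_left]

end InnerAux

/-! ### The `a`-orthogonal projection residual -/

/-- Given `v`, there is `p` in the tangent space with `a(p, η) = a(v, η)` for all tangent `η`. -/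
lemma exists_aProj {N : ℕ} {V H₀ : Type*}
    [NormedAddCommGroup V] [InnerProductSpace ℝ V] [CompleteSpace V]
    [NormedAddCommGroup H₀] [InnerProductSpace ℝ H₀]
    (ι : V →L[ℝ] H₀) (aForm : V →ₗ[ℝ] V →ₗ[ℝ] ℝ)
    (hcoer : ∃ α > 0, ∀ u : V, α * ‖u‖ ^ 2 ≤ aForm u u)
    (hbdd : ∃ β > 0, ∀ u w : V, |aForm u w| ≤ β * ‖u‖ * ‖w‖)
    (φ : Fin N → V) (v : Fin N → V) :
    ∃ p : Fin N → V,
      (∀ a b : Fin N, ⟪ι (p a), ι (φ b)⟫ + ⟪ι (φ a), ι (p b)⟫ = 0) ∧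
      (∀ η : Fin N → V, (∀ a b : Fin N, ⟪ι (η a), ι (φ b)⟫ + ⟪ι (φ a), ι (η b)⟫ = 0) →
        ∑ j, aForm (p j) (η j) = ∑ j, aForm (v j) (η j)) := by
  classical
  obtain ⟨α, hα, hcoer⟩ := hcoer
  obtain ⟨β, hβ, hbdd⟩ := hbdd
  set X := PiLp 2 (fun _ : Fin N => V) with hX
  have hcoord : ∀ (u : X) (j : Fin N), ‖u j‖ ≤ ‖u‖ := by
    intro u j
    have h1 : ‖u‖ ^ 2 = ∑ i, ‖u i‖ ^ 2 := PiLp.norm_sq_eq_of_L2 _ u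
    have h2 : ‖u j‖ ^ 2 ≤ ‖u‖ ^ 2 := by
      rw [h1]
      exact Finset.single_le_sum (fun i _ => sq_nonneg ‖u i‖) (Finset.mem_univ j)
    calc ‖u j‖ = Real.sqrt (‖u j‖ ^ 2) := (Real.sqrt_sq (norm_nonneg _)).symm
      _ ≤ Real.sqrt (‖u‖ ^ 2) := Real.sqrt_le_sqrt h2
      _ = ‖u‖ := Real.sqrt_sq (norm_nonneg _)
  let bilin : X →ₗ[ℝ] X →ₗ[ℝ] ℝ := LinearMap.mk₂ ℝ (fun u w => ∑ j, aForm (u j) (w j))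
    (fun u u' w => by
      rw [← Finset.sum_add_distrib]
      refine Finset.sum_congr rfl fun j _ => ?_
      have h : (u + u') j = u j + u' j := rfl
      rw [h, map_add, LinearMap.add_apply])
    (fun c u w => by
      simp only [smul_eq_mul]
      rw [Finset.mul_sum]
      refine Finset.sum_congr rfl fun j _ => ?_
      have h : (c • u) j = c • u j := rfl
      rw [h, map_smul, LinearMap.smul_apply, smul_eq_mul])
    (fun u w w' => by
      rw [← Finset.sum_add_distrib]
      refine Finset.sum_congr rfl fun j _ => ?_
      have h : (w + w') j = w j + w' j := rfl
      rw [h, map_add])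
    (fun c u w => by
      simp only [smul_eq_mul]
      rw [Finset.mul_sum]
      refine Finset.sum_congr rfl fun j _ => ?_
      have h : (c • w) j = c • w j := rfl
      rw [h, map_smul, smul_eq_mul])
  have hb : ∀ (u w : X), ‖bilin u w‖ ≤ (N * β) * ‖u‖ * ‖w‖ := by
    intro u w
    calc ‖bilin u w‖ = |∑ j, aForm (u j) (w j)| := rfl
      _ ≤ ∑ j, |aForm (u j) (w j)| := Finset.abs_sum_le_sum_abs _ _
      _ ≤ ∑ _j : Fin N, β * ‖u‖ * ‖w‖ := by
          refine Finset.sum_le_sum fun j _ => (hbdd (u j) (w j)).trans ?_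
          have h1 := hcoord u j
          have h2 := hcoord w j
          have := mul_le_mul (mul_le_mul_of_nonneg_left h1 hβ.le) h2 (norm_nonneg _)
            (by positivity)
          linarith
      _ = (N * β) * ‖u‖ * ‖w‖ := by simp [Finset.sum_const]; ring
  let B : X →L[ℝ] X →L[ℝ] ℝ := LinearMap.mkContinuous₂ bilin (N * β) hb
  have hBapp : ∀ (u w : X), B u w = ∑ j, aForm (u j) (w j) := fun u w => rfl
  have hBcoer : ∀ u : X, α * ‖u‖ * ‖u‖ ≤ B u u := by
    intro u
    rw [hBapp]
    calc α * ‖u‖ * ‖u‖ = α * ‖u‖ ^ 2 := by ring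
      _ = ∑ j, α * ‖u j‖ ^ 2 := by
          rw [PiLp.norm_sq_eq_of_L2 _ u, Finset.mul_sum]
      _ ≤ ∑ j, aForm (u j) (u j) := Finset.sum_le_sum fun j _ => hcoer (u j)
  let K : Submodule ℝ X :=
    { carrier := {η : X | ∀ a b : Fin N, ⟪ι (η a), ι (φ b)⟫ + ⟪ι (φ a), ι (η b)⟫ = 0}
      add_mem' := by
        intro η₁ η₂ h1 h2 a b
        have e1 := h1 a b
        have e2 := h2 a b
        have ha : ((η₁ + η₂ : X)) a = η₁ a + η₂ a := rfl
        simp only [ha, show ((η₁ + η₂ : X)) b = η₁ b + η₂ b from rfl, map_add,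
          inner_add_left, inner_add_right]
        linarith
      zero_mem' := by
        intro a b
        have ha : ((0 : X)) a = 0 := rfl
        simp [ha, show ((0 : X)) b = 0 from rfl]
      smul_mem' := by
        intro c η h a b
        have e := h a b
        have h1 : ((c • η : X)) a = c • η a := rfl
        have h2 : ((c • η : X)) b = c • η b := rfl
        simp only [h1, h2, map_smul, real_inner_smul_left, real_inner_smul_right]
        rw [← mul_add, e, mul_zero] }
  have hKmem : ∀ η : X, η ∈ K ↔
      (∀ a b : Fin N, ⟪ι (η a), ι (φ b)⟫ + ⟪ι (φ a), ι (η b)⟫ = 0) := fun η => Iff.rfl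
  have hKclosed : IsClosed (K : Set X) := by
    have hset : (K : Set X) =
        ⋂ a : Fin N, ⋂ b : Fin N,
          {η : X | ⟪ι (η a), ι (φ b)⟫ + ⟪ι (φ a), ι (η b)⟫ = 0} := by
      ext η; simp [hKmem, Set.mem_iInter]
    rw [hset]
    refine isClosed_iInter fun a => isClosed_iInter fun b => isClosed_eq ?_ continuous_const
    have hca : Continuous fun η : X => η a := (continuous_apply a).comp (PiLp.continuous_ofLp 2 _)
    have hcb : Continuous fun η : X => η b := (continuous_apply b).comp (PiLp.continuous_ofLp 2 _)
    exact ((ι.continuous.comp hca).inner continuous_const).add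
      (continuous_const.inner (ι.continuous.comp hcb))
  haveI : CompleteSpace X := inferInstance
  haveI : CompleteSpace K := hKclosed.completeSpace_coe
  let BK : K →L[ℝ] K →L[ℝ] ℝ := ((B.comp K.subtypeL).flip.comp K.subtypeL).flip
  have hBKapp : ∀ u w : K, BK u w = B (u : X) (w : X) := fun u w => rfl
  have coerciveK : IsCoercive BK := by
    refine ⟨α, hα, fun u => ?_⟩
    rw [hBKapp]
    exact hBcoer (u : X)
  let vX : X := WithLp.toLp 2 v
  let F : K →L[ℝ] ℝ := (B vX).comp K.subtypeL
  let z : K := (InnerProductSpace.toDual ℝ K).symm F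
  let p : K := coerciveK.continuousLinearEquivOfBilin.symm z
  have hp : ∀ η : K, BK p η = F η := by
    intro η
    have h1 : ⟪coerciveK.continuousLinearEquivOfBilin p, η⟫ = BK p η :=
      coerciveK.continuousLinearEquivOfBilin_apply p η
    have h2 : coerciveK.continuousLinearEquivOfBilin p = z :=
      coerciveK.continuousLinearEquivOfBilin.apply_symm_apply z
    rw [h2] at h1
    rw [← h1]
    exact InnerProductSpace.toDual_symm_apply
  refine ⟨fun j => (p : X) j, p.2, fun η hη => ?_⟩
  have hηK : (WithLp.toLp 2 η : X) ∈ K := hη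
  have hfin := hp ⟨_, hηK⟩
  rw [hBKapp] at hfin
  have h2 : F (⟨_, hηK⟩ : K) = B vX (WithLp.toLp 2 η : X) := rfl
  rw [h2, hBapp, hBapp] at hfin
  exact hfin

/-- existence and uniqueness of the functions `ψ^{kℓ}` characterized by
`a(ψ^{kℓ}, η) = 0` for all tangent `η` and `(ψ^{kℓ}, φ^{ij})_H = δ_{ik} δ_{jℓ}`. -/
theorem existsUnique_psi_kl {N : ℕ} (hN : 1 ≤ N)
    {V H₀ : Type*}
    [NormedAddCommGroup V] [InnerProductSpace ℝ V] [CompleteSpace V]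
    [NormedAddCommGroup H₀] [InnerProductSpace ℝ H₀] [CompleteSpace H₀]
    (ι : V →L[ℝ] H₀) (hι : Function.Injective ι)
    (aForm : V →ₗ[ℝ] V →ₗ[ℝ] ℝ)
    (hsymm : ∀ u w : V, aForm u w = aForm w u)
    (hcoer : ∃ α > 0, ∀ u : V, α * ‖u‖ ^ 2 ≤ aForm u u)
    (hbdd : ∃ β > 0, ∀ u w : V, |aForm u w| ≤ β * ‖u‖ * ‖w‖)
    (φ : Fin N → V) (hφ : outerProdI ι φ φ = 1) :
    ∀ k ℓ : Fin N, k ≤ ℓ →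
      ∃! ψ : Fin N → V,
        (∀ η : Fin N → V, outerProdI ι η φ + outerProdI ι φ η = 0 →
          (∑ j, aForm (ψ j) (η j)) = 0) ∧
        (∀ i j : Fin N, i ≤ j →
          innerHI ι ψ (smulMat φ (SijMat i j)) =
            (if i = k then (1 : ℝ) else 0) * (if j = ℓ then (1 : ℝ) else 0)) := by
  intro k ℓ hkl
  classical
  set v : Fin N → V := smulMat φ (SijMat k ℓ) with hv
  obtain ⟨p, hpK, hpB⟩ := exists_aProj ι aForm hcoer hbdd φ v
  obtain ⟨α, hα, hco⟩ := hcoer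
  set ψ₀ : Fin N → V := fun j => v j - p j with hψ₀
  -- entrywise form of the tangent condition
  have hEntry : ∀ η : Fin N → V, outerProdI ι η φ + outerProdI ι φ η = 0 →
      ∀ a b : Fin N, ⟪ι (η a), ι (φ b)⟫ + ⟪ι (φ a), ι (η b)⟫ = 0 := by
    intro η hη a b
    have := (Matrix.ext_iff.mpr hη) a b
    simpa [outerProdI, Matrix.add_apply] using this
  -- condition 1 for ψ₀
  have hcond1 : ∀ η : Fin N → V, outerProdI ι η φ + outerProdI ι φ η = 0 →
      (∑ j, aForm (ψ₀ j) (η j)) = 0 := by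
    intro η hη
    have hη' := hEntry η hη
    have hsplit : ∑ j, aForm (ψ₀ j) (η j)
        = ∑ j, aForm (v j) (η j) - ∑ j, aForm (p j) (η j) := by
      rw [← Finset.sum_sub_distrib]
      refine Finset.sum_congr rfl fun m _ => ?_
      show (aForm (v m - p m)) (η m) = _
      simp
    rw [hsplit, hpB η hη', sub_self]
  -- condition 2 for ψ₀
  have hcond2 : ∀ i j : Fin N, i ≤ j →
      innerHI ι ψ₀ (smulMat φ (SijMat i j)) =
        (if i = k then (1 : ℝ) else 0) * (if j = ℓ then (1 : ℝ) else 0) := by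
    intro i j hij
    have hsub := innerHI_sub ι v p (smulMat φ (SijMat i j))
    have hv2 : innerHI ι v (smulMat φ (SijMat i j)) =
        (if i = k then (1 : ℝ) else 0) * (if j = ℓ then (1 : ℝ) else 0) := by
      rw [innerHI_smulMat]
      have hrw : ∀ j' i' : Fin N, ⟪ι (v j'), ι (φ i')⟫ = SijMat k ℓ i' j' :=
        fun j' i' => inner_smulMat_phi ι φ hφ _ i' j'
      simp only [hrw]
      exact frob_Sij hij hkl
    have hp0 : innerHI ι p (smulMat φ (SijMat i j)) = 0 :=
      innerHI_skew ι φ p _ (SijMat_symm i j) hpK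
    calc innerHI ι ψ₀ (smulMat φ (SijMat i j))
        = innerHI ι v (smulMat φ (SijMat i j)) - innerHI ι p (smulMat φ (SijMat i j)) := hsub
      _ = _ := by rw [hv2, hp0, sub_zero]
  refine ⟨ψ₀, ⟨hcond1, hcond2⟩, ?_⟩
  rintro ψ ⟨h1, h2⟩
  set d : Fin N → V := fun m => ψ m - ψ₀ m with hd
  have hd0 : ∀ i j : Fin N, i ≤ j → innerHI ι d (smulMat φ (SijMat i j)) = 0 := by
    intro i j hij
    have hsub := innerHI_sub ι ψ ψ₀ (smulMat φ (SijMat i j))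
    rw [hsub, h2 i j hij, hcond2 i j hij, sub_self]
  have hdiag : ∀ a : Fin N, ⟪ι (d a), ι (φ a)⟫ = 0 := by
    intro a
    have h := hd0 a a le_rfl
    rw [innerHI_smulMat, sum_Sii] at h
    exact h
  have hg : ∀ a b : Fin N, a < b → ⟪ι (d a), ι (φ b)⟫ + ⟪ι (d b), ι (φ a)⟫ = 0 := by
    intro a b hab
    have h := hd0 a b hab.le
    rw [innerHI_smulMat, sum_Sij (ne_of_lt hab)] at h
    have h2ne : (Real.sqrt 2)⁻¹ ≠ 0 := by positivity
    have h3 := (mul_eq_zero.mp h).resolve_left h2ne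
    linarith
  have hdK : ∀ a b : Fin N, ⟪ι (d a), ι (φ b)⟫ + ⟪ι (φ a), ι (d b)⟫ = 0 := by
    intro a b
    have hc : ⟪ι (φ a), ι (d b)⟫ = ⟪ι (d b), ι (φ a)⟫ := real_inner_comm _ _
    rw [hc]
    rcases lt_trichotomy a b with h | rfl | h
    · exact hg a b h
    · rw [hdiag a]; ring
    · have := hg b a h; linarith
  have hdMat : outerProdI ι d φ + outerProdI ι φ d = 0 := by
    refine Matrix.ext fun a b => ?_
    simp only [Matrix.add_apply, outerProdI, Matrix.of_apply, Matrix.zero_apply]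
    exact hdK a b
  have hA1 := h1 d hdMat
  have hA2 := hcond1 d hdMat
  have hSumZero : ∑ j, aForm (d j) (d j) = 0 := by
    have hsplit : ∑ j, aForm (d j) (d j)
        = ∑ j, aForm (ψ j) (d j) - ∑ j, aForm (ψ₀ j) (d j) := by
      rw [← Finset.sum_sub_distrib]
      refine Finset.sum_congr rfl fun m _ => ?_
      show (aForm (ψ m - ψ₀ m)) (d m) = _
      simp
    rw [hsplit, hA1, hA2, sub_self]
  have hdz : ∀ j : Fin N, d j = 0 := by
    intro j0
    have hnn : ∀ j : Fin N, (0:ℝ) ≤ α * ‖d j‖ ^ 2 := fun j => by positivity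
    have hsum : ∑ j, α * ‖d j‖ ^ 2 ≤ 0 := by
      rw [← hSumZero]
      exact Finset.sum_le_sum fun j _ => hco (d j)
    have hle : α * ‖d j0‖ ^ 2 ≤ 0 := by
      calc α * ‖d j0‖ ^ 2 ≤ ∑ j, α * ‖d j‖ ^ 2 :=
            Finset.single_le_sum (fun j _ => hnn j) (Finset.mem_univ j0)
        _ ≤ 0 := hsum
    have hz : α * ‖d j0‖ ^ 2 = 0 := le_antisymm hle (hnn j0)
    have h4 := (mul_eq_zero.mp hz).resolve_left (ne_of_gt hα)
    have h5 : ‖d j0‖ = 0 := by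
      have := pow_eq_zero_iff (n := 2) (by norm_num) |>.mp h4
      exact this
    exact norm_eq_zero.mp h5
  funext j
  have := hdz j
  exact sub_eq_zero.mp (by simpa [hd] using this)
end

section
/- Let Tφ := (T(ιφ_1), …, T(ιφ_N)) ∈ Ṽ^N and M := ⟦φ, Tφ⟧ ∈ ℝ^{N×N} (entries M_{ij} = ⟨ιφ_i, ι T(ιφ_j)⟩). Then M is invertible, and ψ := (Tφ)·M^{-1} is the unique element of Ṽ^N satisfying a(ψ, η) = 0 for all η ∈ T_φ and (ψ, φS^{ij})_H = δ_{ij} for all 1 ≤ i ≤ j ≤ N; equivalently, ψ = Σ_{k=1}^N ψ^{kk}. -/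
open scoped RealInnerProductSpace

/-- The tuple `Tφ = (T(ιφ_1), …, T(ιφ_N))`. -/
noncomputable def Tphi {N : ℕ} {V H₀ : Type*} (ι : V → H₀) (T : H₀ → V)
    (φ : Fin N → V) : Fin N → V :=
  fun i => T (ι (φ i))

/-- The matrix `M = ⟦φ, Tφ⟧` with entries `⟨ιφ_i, ι T(ιφ_j)⟩`. -/
noncomputable def Mmat {N : ℕ} {V H₀ : Type*} [NormedAddCommGroup V]
    [NormedAddCommGroup H₀] [InnerProductSpace ℝ H₀] [NormedSpace ℝ V]
    (ι : V →L[ℝ] H₀) (T : H₀ → V) (φ : Fin N → V) : Matrix (Fin N) (Fin N) ℝ :=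
  Matrix.of fun i j => ⟪ι (φ i), ι (T (ι (φ j)))⟫

private lemma sum_std_s7 {N : ℕ} (a b : Fin N) (E : Fin N → Fin N → ℝ) :
    (∑ j', ∑ k, Matrix.single a b (1:ℝ) k j' * E j' k) = E b a := by
  rw [Finset.sum_eq_single b]
  · rw [Finset.sum_eq_single a]
    · simp [Matrix.single]
    · intro k _ hk
      simp [Matrix.single, Ne.symm hk]
    · simp
  · intro j' _ hj'
    rw [Finset.sum_eq_zero]
    intro k _
    simp [Matrix.single, Ne.symm hj']
  · simp

private lemma sum_std_diag {N : ℕ} (a b : Fin N) :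
    (∑ j' : Fin N, Matrix.single a b (1:ℝ) j' j') = if a = b then 1 else 0 := by
  rcases eq_or_ne a b with rfl | h
  · simp [Matrix.single, Finset.sum_ite_eq]
  · rw [Finset.sum_eq_zero, if_neg h]
    intro j' _
    simp only [Matrix.single, Matrix.of_apply, ite_eq_right_iff, one_ne_zero]
    rintro ⟨rfl, rfl⟩
    exact absurd rfl h

private lemma sum_Sij_diag_case {N : ℕ} (i : Fin N) (E : Fin N → Fin N → ℝ) :
    (∑ j', ∑ k, SijMat i i k j' * E j' k) = E i i := by
  simp only [SijMat, if_pos rfl]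
  exact sum_std_s7 i i E

private lemma sum_Sij_ne_case {N : ℕ} {i j : Fin N} (h : i ≠ j) (E : Fin N → Fin N → ℝ) :
    (∑ j', ∑ k, SijMat i j k j' * E j' k) = (Real.sqrt 2)⁻¹ * (E j i + E i j) := by
  have hterm : ∀ j' k, SijMat i j k j' * E j' k
      = (Real.sqrt 2)⁻¹ * (Matrix.single i j (1:ℝ) k j' * E j' k)
        + (Real.sqrt 2)⁻¹ * (Matrix.single j i (1:ℝ) k j' * E j' k) := by
    intro j' k
    simp only [SijMat, if_neg h, Matrix.smul_apply, Matrix.add_apply, smul_eq_mul]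
    ring
  rw [Finset.sum_congr rfl fun j' _ => Finset.sum_congr rfl fun k _ => hterm j' k]
  simp only [Finset.sum_add_distrib, ← Finset.mul_sum]
  rw [sum_std_s7 i j E, sum_std_s7 j i E]
  ring

private lemma trace_Sij {N : ℕ} (i j : Fin N) :
    (∑ j' : Fin N, SijMat i j j' j') = if i = j then 1 else 0 := by
  rcases eq_or_ne i j with rfl | h
  · simp only [SijMat, if_pos rfl]
    simpa using sum_std_diag i i
  · simp only [SijMat, if_neg h, Matrix.smul_apply, Matrix.add_apply, smul_eq_mul]
    rw [← Finset.mul_sum, Finset.sum_add_distrib, sum_std_diag i j, sum_std_diag j i,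
      if_neg h, if_neg (Ne.symm h)]
    ring

private lemma sum_delta_mul {N : ℕ} (i j : Fin N) :
    (∑ k, (if i = k then (1:ℝ) else 0) * (if j = k then 1 else 0)) = if i = j then 1 else 0 := by
  rcases eq_or_ne i j with rfl | h
  · simp [Finset.sum_ite_eq]
  · rw [Finset.sum_eq_zero, if_neg h]
    intro k _
    rcases eq_or_ne i k with rfl | h1
    · simp [Ne.symm h]
    · simp [h1]

/-- `M = ⟦φ, Tφ⟧` is invertible and `ψ = (Tφ)·M⁻¹` is the unique element
with `a(ψ, η) = 0` for all tangent `η` and `(ψ, φ S^{ij})_H = δ_{ij}`; moreover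
`ψ = Σ_k ψ^{kk}`. -/
theorem psi_explicit_formula {N : ℕ} (hN : 1 ≤ N)
    {V H₀ : Type*}
    [NormedAddCommGroup V] [InnerProductSpace ℝ V] [CompleteSpace V]
    [NormedAddCommGroup H₀] [InnerProductSpace ℝ H₀] [CompleteSpace H₀]
    (ι : V →L[ℝ] H₀) (hι : Function.Injective ι) (hdense : DenseRange ι)
    (aForm : V →ₗ[ℝ] V →ₗ[ℝ] ℝ)
    (hsymm : ∀ u w : V, aForm u w = aForm w u)
    (hcoer : ∃ α > 0, ∀ u : V, α * ‖u‖ ^ 2 ≤ aForm u u)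
    (hbdd : ∃ β > 0, ∀ u w : V, |aForm u w| ≤ β * ‖u‖ * ‖w‖)
    (T : H₀ → V) (hT : ∀ (f : H₀) (w : V), aForm (T f) w = ⟪f, ι w⟫)
    (φ : Fin N → V) (hφ : outerProdI ι φ φ = 1)
    (ψfam : Fin N → Fin N → Fin N → V)
    (hψa : ∀ k ℓ : Fin N, k ≤ ℓ →
      ∀ η : Fin N → V, outerProdI ι η φ + outerProdI ι φ η = 0 →
        (∑ j, aForm (ψfam k ℓ j) (η j)) = 0)
    (hψH : ∀ k ℓ : Fin N, k ≤ ℓ → ∀ i j : Fin N, i ≤ j →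
      innerHI ι (ψfam k ℓ) (smulMat φ (SijMat i j)) =
        (if i = k then (1 : ℝ) else 0) * (if j = ℓ then (1 : ℝ) else 0)) :
    IsUnit (Mmat ι T φ).det ∧
    (∀ η : Fin N → V, outerProdI ι η φ + outerProdI ι φ η = 0 →
      (∑ j, aForm (smulMat (Tphi (↑ι) T φ) (Mmat ι T φ)⁻¹ j) (η j)) = 0) ∧
    (∀ i j : Fin N, i ≤ j →
      innerHI ι (smulMat (Tphi (↑ι) T φ) (Mmat ι T φ)⁻¹) (smulMat φ (SijMat i j)) =
        if i = j then (1 : ℝ) else 0) ∧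
    (∀ z : Fin N → V,
      (∀ η : Fin N → V, outerProdI ι η φ + outerProdI ι φ η = 0 →
        (∑ j, aForm (z j) (η j)) = 0) →
      (∀ i j : Fin N, i ≤ j →
        innerHI ι z (smulMat φ (SijMat i j)) = if i = j then (1 : ℝ) else 0) →
      z = smulMat (Tphi (↑ι) T φ) (Mmat ι T φ)⁻¹) ∧
    smulMat (Tphi (↑ι) T φ) (Mmat ι T φ)⁻¹ = ∑ k, ψfam k k := by
  classical
  obtain ⟨α, hαpos, hα⟩ := hcoer
  set Tφ : Fin N → V := Tphi (↑ι) T φ with hTφ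
  set M : Matrix (Fin N) (Fin N) ℝ := Mmat ι T φ with hMdef
  have hφ' : ∀ i j, ⟪ι (φ i), ι (φ j)⟫ = if i = j then (1:ℝ) else 0 := by
    intro i j
    simpa [outerProdI, Matrix.one_apply] using congrFun (congrFun hφ i) j
  have hMentry : ∀ i j, M i j = ⟪ι (φ i), ι (Tφ j)⟫ := fun i j => rfl
  have hT' : ∀ (i : Fin N) (w : V), aForm (Tφ i) w = ⟪ι (φ i), ι w⟫ := fun i w => hT (ι (φ i)) w
  have hMa : ∀ i j, M i j = aForm (Tφ i) (Tφ j) := fun i j => (hT' i (Tφ j)).symm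
  -- coercivity: nonpositive energy implies zero
  have hzero : ∀ u : V, aForm u u ≤ 0 → u = 0 := by
    intro u hu
    have h1 := hα u
    have h3 : α * ‖u‖ ^ 2 ≤ α * 0 := by simpa using le_trans h1 hu
    have h4 : ‖u‖ ^ 2 ≤ 0 := le_of_mul_le_mul_left (by simpa using h3) hαpos
    have h5 : ‖u‖ = 0 := by nlinarith [norm_nonneg u]
    exact norm_eq_zero.1 h5
  -- determinant nonzero
  have hdet : M.det ≠ 0 := by
    intro h0
    obtain ⟨c, hc0, hc⟩ := Matrix.exists_mulVec_eq_zero_iff.2 h0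
    set u : V := ∑ i, c i • Tφ i with hu
    have hform : ∀ w : V, aForm u w = ⟪∑ i, c i • ι (φ i), ι w⟫ := by
      intro w
      rw [hu, map_sum, LinearMap.sum_apply, sum_inner]
      refine Finset.sum_congr rfl fun i _ => ?_
      rw [map_smul, LinearMap.smul_apply, smul_eq_mul, hT', real_inner_smul_left]
    have step2 : ∀ i, aForm (Tφ i) u = M.mulVec c i := by
      intro i
      rw [hu, map_sum, Matrix.mulVec, dotProduct]
      refine Finset.sum_congr rfl fun j _ => ?_
      rw [map_smul, smul_eq_mul, ← hMa, mul_comm]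
    have huu : aForm u u = 0 := by
      have step1 : ∀ w : V, aForm u w = ∑ i, c i * aForm (Tφ i) w := by
        intro w
        rw [hu, map_sum, LinearMap.sum_apply]
        exact Finset.sum_congr rfl fun i _ => by
          rw [map_smul, LinearMap.smul_apply, smul_eq_mul]
      rw [step1 u, Finset.sum_congr rfl fun i _ => by rw [step2 i]]
      simp [hc]
    have hu0 : u = 0 := hzero u huu.le
    have hg0 : (∑ i, c i • ι (φ i)) = 0 := by
      have hgw : ∀ w : V, ⟪∑ i, c i • ι (φ i), ι w⟫ = 0 := by
        intro w
        rw [← hform w, hu0]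
        simp
      have hext : (fun x : H₀ => ⟪∑ i, c i • ι (φ i), x⟫) = fun _ => (0:ℝ) := by
        refine Continuous.ext_on hdense (continuous_const.inner continuous_id) continuous_const ?_
        rintro x ⟨w, rfl⟩
        exact hgw w
      have := congrFun hext (∑ i, c i • ι (φ i))
      exact inner_self_eq_zero.1 this
    have : ∀ k, c k = 0 := by
      intro k
      have h1 : ⟪ι (φ k), ∑ i, c i • ι (φ i)⟫ = c k := by
        rw [inner_sum]
        simp only [real_inner_smul_right, hφ']
        simp
      rw [hg0] at h1
      simpa using h1.symm
    exact hc0 (funext this)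
  have hMunit : IsUnit M.det := isUnit_iff_ne_zero.mpr hdet
  have hMsymm : ∀ i j, M i j = M j i := by
    intro i j; rw [hMa, hMa, hsymm]
  have hMT : M.transpose = M := by
    ext i j
    simp only [Matrix.transpose_apply]
    exact hMsymm j i
  have hMinv_symm : ∀ i j, M⁻¹ i j = M⁻¹ j i := by
    intro i j
    have h := Matrix.transpose_nonsing_inv M
    rw [hMT] at h
    exact (congrFun (congrFun h i) j : _).symm
  have hMM : M * M⁻¹ = 1 := Matrix.mul_nonsing_inv M hMunit
  set ψ : Fin N → V := smulMat Tφ M⁻¹ with hψdef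
  -- ⟦ψ, φ⟧ = 1
  have hψφ : ∀ j k, ⟪ι (ψ j), ι (φ k)⟫ = if k = j then (1:ℝ) else 0 := by
    intro j k
    have : ι (ψ j) = ∑ i, M⁻¹ i j • ι (Tφ i) := by
      rw [hψdef]; simp [smulMat]
    rw [this, sum_inner]
    have : ∀ i, ⟪M⁻¹ i j • ι (Tφ i), ι (φ k)⟫ = M k i * M⁻¹ i j := by
      intro i
      rw [real_inner_smul_left, real_inner_comm, ← hMentry, mul_comm]
    rw [Finset.sum_congr rfl fun i _ => this i, ← Matrix.mul_apply, hMM, Matrix.one_apply]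
  -- expansion of the a-form against ψ
  have hψa' : ∀ η : Fin N → V, ∀ j, aForm (ψ j) (η j) = ∑ i, M⁻¹ i j * ⟪ι (φ i), ι (η j)⟫ := by
    intro η j
    rw [hψdef]
    show aForm (∑ i, M⁻¹ i j • Tφ i) (η j) = _
    rw [map_sum, LinearMap.sum_apply]
    refine Finset.sum_congr rfl fun i _ => ?_
    rw [map_smul, LinearMap.smul_apply, smul_eq_mul, hT']
  -- condition (2): a(ψ, η) = 0 for tangent η
  have cond2 : ∀ η : Fin N → V, outerProdI ι η φ + outerProdI ι φ η = 0 →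
      (∑ j, aForm (ψ j) (η j)) = 0 := by
    intro η hη
    have hA : ∀ i j, ⟪ι (φ i), ι (η j)⟫ = -⟪ι (φ j), ι (η i)⟫ := by
      intro i j
      have h := congrFun (congrFun hη j) i
      simp only [outerProdI, Matrix.add_apply, Matrix.of_apply, Matrix.zero_apply] at h
      rw [real_inner_comm] at h
      linarith
    set g : Fin N → Fin N → ℝ := fun i j => M⁻¹ i j * ⟪ι (φ i), ι (η j)⟫ with hg
    have hrw : (∑ j, aForm (ψ j) (η j)) = ∑ j, ∑ i, g i j :=
      Finset.sum_congr rfl fun j _ => hψa' η j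
    have hganti : ∀ i j, g i j = -g j i := by
      intro i j
      rw [hg]
      simp only
      rw [hMinv_symm, hA, mul_neg]
    have hS : (∑ j, ∑ i, g i j) = -∑ j, ∑ i, g i j := by
      calc (∑ j, ∑ i, g i j) = ∑ j, ∑ i, -g j i :=
            Finset.sum_congr rfl fun j _ => Finset.sum_congr rfl fun i _ => hganti i j
        _ = -∑ j, ∑ i, g j i := by simp [Finset.sum_neg_distrib]
        _ = -∑ j, ∑ i, g i j := by rw [Finset.sum_comm]
    rw [hrw]
    linarith
  -- inner product expansion
  have hinner : ∀ (z : Fin N → V) (S : Matrix (Fin N) (Fin N) ℝ),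
      innerHI ι z (smulMat φ S) = ∑ j, ∑ k, S k j * ⟪ι (z j), ι (φ k)⟫ := by
    intro z S
    unfold innerHI smulMat
    refine Finset.sum_congr rfl fun j _ => ?_
    rw [map_sum, inner_sum]
    refine Finset.sum_congr rfl fun k _ => ?_
    rw [map_smul, real_inner_smul_right]
  -- condition (3)
  have cond3 : ∀ i j : Fin N, i ≤ j →
      innerHI ι ψ (smulMat φ (SijMat i j)) = if i = j then (1:ℝ) else 0 := by
    intro i j hij
    rw [hinner]
    have hdiag : ∀ j', (∑ k, SijMat i j k j' * ⟪ι (ψ j'), ι (φ k)⟫) = SijMat i j j' j' := by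
      intro j'
      have hterm : ∀ k, SijMat i j k j' * ⟪ι (ψ j'), ι (φ k)⟫
          = if k = j' then SijMat i j k j' else 0 := by
        intro k
        rw [hψφ]
        by_cases h : k = j' <;> simp [h]
      rw [Finset.sum_congr rfl fun k _ => hterm k]
      simp
    rw [Finset.sum_congr rfl fun j' _ => hdiag j']
    exact trace_Sij i j
  -- uniqueness
  have huniq : ∀ z : Fin N → V,
      (∀ η : Fin N → V, outerProdI ι η φ + outerProdI ι φ η = 0 →
        (∑ j, aForm (z j) (η j)) = 0) →
      (∀ i j : Fin N, i ≤ j →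
        innerHI ι z (smulMat φ (SijMat i j)) = if i = j then (1:ℝ) else 0) →
      z = ψ := by
    intro z hz1 hz2
    set d : Fin N → V := fun j => z j - ψ j with hd
    set E : Fin N → Fin N → ℝ := fun a b => ⟪ι (d a), ι (φ b)⟫ with hE
    have hEsplit : ∀ a b, E a b = ⟪ι (z a), ι (φ b)⟫ - ⟪ι (ψ a), ι (φ b)⟫ := by
      intro a b
      rw [hE]
      simp only [hd, map_sub, inner_sub_left]
    have hdzero : ∀ i j : Fin N, i ≤ j →
        (∑ j', ∑ k, SijMat i j k j' * E j' k) = 0 := by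
      intro i j hij
      have h1 := hz2 i j hij
      have h2 := cond3 i j hij
      rw [hinner] at h1 h2
      have : (∑ j', ∑ k, SijMat i j k j' * E j' k)
          = (∑ j', ∑ k, SijMat i j k j' * ⟪ι (z j'), ι (φ k)⟫)
            - (∑ j', ∑ k, SijMat i j k j' * ⟪ι (ψ j'), ι (φ k)⟫) := by
        rw [← Finset.sum_sub_distrib]
        refine Finset.sum_congr rfl fun j' _ => ?_
        rw [← Finset.sum_sub_distrib]
        refine Finset.sum_congr rfl fun k _ => ?_
        rw [hEsplit, mul_sub]
      rw [this, h1, h2, sub_self]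
    have hEanti : ∀ i j : Fin N, E i j + E j i = 0 := by
      have key : ∀ i j : Fin N, i ≤ j → E i j + E j i = 0 := by
        intro i j hij
        rcases eq_or_ne i j with rfl | hne
        · have h0 : E i i = 0 := by
            have := hdzero i i le_rfl
            rwa [sum_Sij_diag_case i E] at this
          rw [h0]; ring
        · have h0 := hdzero i j hij
          rw [sum_Sij_ne_case hne E] at h0
          have hs2 : (Real.sqrt 2)⁻¹ ≠ 0 := by positivity
          rcases mul_eq_zero.1 h0 with h' | h'
          · exact absurd h' hs2
          · linarith
      intro i j
      rcases le_total i j with h | h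
      · exact key i j h
      · have := key j i h; linarith
    have hdtan : outerProdI ι d φ + outerProdI ι φ d = 0 := by
      ext i j
      simp only [outerProdI, Matrix.add_apply, Matrix.of_apply, Matrix.zero_apply]
      have : ⟪ι (φ i), ι (d j)⟫ = E j i := real_inner_comm _ _
      rw [this]
      exact hEanti i j
    have hdd : (∑ j, aForm (d j) (d j)) = 0 := by
      have h1 := hz1 d hdtan
      have h2 := cond2 d hdtan
      have : (∑ j, aForm (d j) (d j)) = (∑ j, aForm (z j) (d j)) - ∑ j, aForm (ψ j) (d j) := by
        rw [← Finset.sum_sub_distrib]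
        refine Finset.sum_congr rfl fun j _ => ?_
        show aForm (z j - ψ j) (d j) = _
        rw [map_sub aForm (z j) (ψ j)]
        exact LinearMap.sub_apply _ _ _
      rw [this, h1, h2, sub_self]
    have hdj : ∀ j, d j = 0 := by
      intro j
      have hnn : ∀ i ∈ Finset.univ, (0:ℝ) ≤ aForm (d i) (d i) := by
        intro i _
        refine le_trans ?_ (hα (d i))
        positivity
      have := (Finset.sum_eq_zero_iff_of_nonneg hnn).1 hdd j (Finset.mem_univ j)
      exact hzero (d j) this.le
    funext j
    have := hdj j
    rw [hd] at this
    simpa [sub_eq_zero] using this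
  -- conditions for ∑ ψfam k k
  have hsum1 : ∀ η : Fin N → V, outerProdI ι η φ + outerProdI ι φ η = 0 →
      (∑ j, aForm ((∑ k, ψfam k k) j) (η j)) = 0 := by
    intro η hη
    have : ∀ j, aForm ((∑ k, ψfam k k) j) (η j) = ∑ k, aForm (ψfam k k j) (η j) := by
      intro j
      rw [Finset.sum_apply, map_sum, LinearMap.sum_apply]
    rw [Finset.sum_congr rfl fun j _ => this j, Finset.sum_comm]
    rw [Finset.sum_eq_zero]
    intro k _
    exact hψa k k le_rfl η hη
  have hsum2 : ∀ i j : Fin N, i ≤ j →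
      innerHI ι (∑ k, ψfam k k) (smulMat φ (SijMat i j)) = if i = j then (1:ℝ) else 0 := by
    intro i j hij
    have hlin : innerHI ι (∑ k, ψfam k k) (smulMat φ (SijMat i j))
        = ∑ k, innerHI ι (ψfam k k) (smulMat φ (SijMat i j)) := by
      unfold innerHI
      rw [Finset.sum_comm]
      refine Finset.sum_congr rfl fun j' _ => ?_
      rw [Finset.sum_apply, map_sum, sum_inner]
    rw [hlin, Finset.sum_congr rfl fun k _ => hψH k k le_rfl i j hij]
    exact sum_delta_mul i j
  refine ⟨hMunit, cond2, cond3, huniq, (huniq (∑ k, ψfam k k) hsum1 hsum2).symm⟩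
end

section
/- Let Tφ := (T(ιφ_1), …, T(ιφ_N)) ∈ Ṽ^N and M := ⟦φ, Tφ⟧ (entries M_{ij} = ⟨ιφ_i, ι T(ιφ_j)⟩), which is invertible. Then g := φ − (Tφ)·M^{-1} is the unique element of the tangent space T_φ satisfying a(g, η) = a(φ, η) for all η ∈ T_φ; that is, g is the Riemannian gradient at φ (with respect to the metric induced by a) of any energy functional whose directional derivative at φ is v ↦ a(φ, v). -/
open scoped RealInnerProductSpace

/-- `M = ⟦φ, Tφ⟧` is invertible and `g = φ − (Tφ)·M⁻¹` is the unique
element of the tangent space `T_φ` with `a(g, η) = a(φ, η)` for all tangent `η`, i.e.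
the Riemannian gradient at `φ` (w.r.t. the metric induced by `a`) of any energy whose
directional derivative at `φ` is `v ↦ a(φ, v)`. -/
theorem riemannian_gradient_formula {N : ℕ} (hN : 1 ≤ N)
    {V H₀ : Type*}
    [NormedAddCommGroup V] [InnerProductSpace ℝ V] [CompleteSpace V]
    [NormedAddCommGroup H₀] [InnerProductSpace ℝ H₀] [CompleteSpace H₀]
    (ι : V →L[ℝ] H₀) (hι : Function.Injective ι) (hdense : DenseRange ι)
    (aForm : V →ₗ[ℝ] V →ₗ[ℝ] ℝ)
    (hsymm : ∀ u w : V, aForm u w = aForm w u)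
    (hcoer : ∃ α > 0, ∀ u : V, α * ‖u‖ ^ 2 ≤ aForm u u)
    (hbdd : ∃ β > 0, ∀ u w : V, |aForm u w| ≤ β * ‖u‖ * ‖w‖)
    (T : H₀ → V) (hT : ∀ (f : H₀) (w : V), aForm (T f) w = ⟪f, ι w⟫)
    (φ : Fin N → V) (hφ : outerProdI ι φ φ = 1) :
    IsUnit (Mmat ι T φ).det ∧
    (outerProdI ι (φ - smulMat (Tphi (↑ι) T φ) (Mmat ι T φ)⁻¹) φ +
      outerProdI ι φ (φ - smulMat (Tphi (↑ι) T φ) (Mmat ι T φ)⁻¹) = 0) ∧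
    (∀ η : Fin N → V, outerProdI ι η φ + outerProdI ι φ η = 0 →
      (∑ j, aForm ((φ - smulMat (Tphi (↑ι) T φ) (Mmat ι T φ)⁻¹) j) (η j)) =
        ∑ j, aForm (φ j) (η j)) ∧
    (∀ g : Fin N → V,
      (outerProdI ι g φ + outerProdI ι φ g = 0) →
      (∀ η : Fin N → V, outerProdI ι η φ + outerProdI ι φ η = 0 →
        (∑ j, aForm (g j) (η j)) = ∑ j, aForm (φ j) (η j)) →
      g = φ - smulMat (Tphi (↑ι) T φ) (Mmat ι T φ)⁻¹) := by
  obtain ⟨α, hα, hcoer⟩ := hcoer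
  set t : Fin N → V := Tphi (↑ι) T φ with ht
  set M : Matrix (Fin N) (Fin N) ℝ := Mmat ι T φ with hMdef
  have htdef : ∀ i, t i = T (ι (φ i)) := fun i => rfl
  have hortho : ∀ i j, ⟪ι (φ i), ι (φ j)⟫ = if i = j then (1:ℝ) else 0 := by
    intro i j
    have := congrFun (congrFun hφ i) j
    simpa [outerProdI, Matrix.one_apply] using this
  have hMe : ∀ i j, M i j = ⟪ι (φ i), ι (t j)⟫ := fun i j => rfl
  have hMa : ∀ i j, M i j = aForm (t i) (t j) := by
    intro i j
    rw [hMe, htdef i, ← hT (ι (φ i)) (t j)]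
  have hMs : ∀ i j, M i j = M j i := by
    intro i j; rw [hMa, hMa, hsymm]
  have htφ : ∀ k j, ⟪ι (t k), ι (φ j)⟫ = M j k := by
    intro k j; rw [real_inner_comm]; rfl
  have haη : ∀ (k : Fin N) (w : V), aForm (t k) w = ⟪ι (φ k), ι w⟫ := by
    intro k w; rw [htdef, hT]
  -- density: orthogonal to range implies zero
  have hdz : ∀ h : H₀, (∀ w : V, ⟪h, ι w⟫ = 0) → h = 0 := by
    intro h hh
    have hc1 : Continuous fun y : H₀ => ⟪h, y⟫ := continuous_const.inner continuous_id
    have hfun : (fun y : H₀ => ⟪h, y⟫) = fun _ => (0:ℝ) := by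
      apply Continuous.ext_on hdense hc1 continuous_const
      rintro y ⟨w, rfl⟩
      exact hh w
    have : ⟪h, h⟫ = 0 := congrFun hfun h
    exact inner_self_eq_zero.mp this
  -- coercivity zero test
  have hzero : ∀ u : V, aForm u u = 0 → u = 0 := by
    intro u hu
    have h1 := hcoer u
    rw [hu] at h1
    have h2 : ‖u‖ ^ 2 ≤ 0 := by nlinarith [sq_nonneg ‖u‖]
    have h3 : ‖u‖ = 0 := by nlinarith [sq_nonneg ‖u‖, norm_nonneg u]
    simpa using h3
  -- determinant is a unit
  have hdet : IsUnit M.det := by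
    rw [isUnit_iff_ne_zero]
    intro h0
    obtain ⟨x, hx, hMx⟩ := (Matrix.exists_mulVec_eq_zero_iff).mpr h0
    set u : V := ∑ i, x i • t i with hu
    have hqu : ∀ w : V, aForm u w = ∑ i, x i * aForm (t i) w := by
      intro w
      rw [hu, map_sum]
      simp [LinearMap.sum_apply]
    have hq : aForm u u = 0 := by
      rw [hqu]
      have : ∀ i, aForm (t i) u = ∑ j, M i j * x j := by
        intro i
        rw [hu, map_sum]
        refine Finset.sum_congr rfl fun j _ => ?_
        rw [map_smul, smul_eq_mul, hMa, mul_comm]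
      calc (∑ i, x i * aForm (t i) u) = ∑ i, x i * (M.mulVec x i) := by
            refine Finset.sum_congr rfl fun i _ => ?_
            rw [this i]; rfl
        _ = 0 := by rw [hMx]; simp
    have hu0 : u = 0 := hzero u hq
    set v : V := ∑ i, x i • φ i with hv
    have hιv : ι v = 0 := by
      apply hdz
      intro w
      have : aForm u w = ⟪ι v, ι w⟫ := by
        rw [hqu, hv]
        simp only [map_sum, map_smul, sum_inner, real_inner_smul_left]
        refine Finset.sum_congr rfl fun i _ => ?_
        rw [haη]
      rw [hu0] at this
      simpa using this.symm
    have hv0 : v = 0 := hι (by simpa using hιv)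
    apply hx
    funext j
    have : ⟪ι (φ j), ι v⟫ = x j := by
      rw [hv]
      simp only [map_sum, map_smul, inner_sum, real_inner_smul_right]
      rw [Finset.sum_eq_single j]
      · rw [hortho]; simp
      · intro i _ hij; rw [hortho]; simp [Ne.symm hij]
      · simp
    rw [hv0] at this
    simpa using this.symm
  have hpart2 : outerProdI ι (φ - smulMat t M⁻¹) φ + outerProdI ι φ (φ - smulMat t M⁻¹) = 0 := by
    have hMN : M * M⁻¹ = 1 := Matrix.mul_nonsing_inv M hdet
    ext i j
    simp only [outerProdI, Matrix.add_apply, Matrix.of_apply, Matrix.zero_apply,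
      Pi.sub_apply, smulMat, map_sub, map_sum, map_smul, inner_sub_left, inner_sub_right,
      sum_inner, inner_sum, real_inner_smul_left, real_inner_smul_right]
    have e1 : (∑ k, M⁻¹ k i * ⟪ι (t k), ι (φ j)⟫) = (1 : Matrix (Fin N) (Fin N) ℝ) j i := by
      rw [← hMN, Matrix.mul_apply]
      refine Finset.sum_congr rfl fun k _ => ?_
      rw [htφ, mul_comm]
    have e2 : (∑ k, M⁻¹ k j * ⟪ι (φ i), ι (t k)⟫) = (1 : Matrix (Fin N) (Fin N) ℝ) i j := by
      rw [← hMN, Matrix.mul_apply]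
      refine Finset.sum_congr rfl fun k _ => ?_
      rw [← hMe, mul_comm]
    rw [e1, e2, hortho]
    by_cases h : i = j <;> simp [h, Matrix.one_apply, eq_comm]
  have hpart3 : ∀ η : Fin N → V, outerProdI ι η φ + outerProdI ι φ η = 0 →
      (∑ j, aForm ((φ - smulMat t M⁻¹) j) (η j)) = ∑ j, aForm (φ j) (η j) := by
    intro η htan
    have hBanti : ∀ k j, ⟪ι (φ j), ι (η k)⟫ = - ⟪ι (φ k), ι (η j)⟫ := by
      intro k j
      have := congrFun (congrFun htan j) k
      simp only [outerProdI, Matrix.add_apply, Matrix.of_apply, Matrix.zero_apply] at this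
      have h2 := congrFun (congrFun htan k) j
      simp only [outerProdI, Matrix.add_apply, Matrix.of_apply, Matrix.zero_apply] at h2
      rw [real_inner_comm] at h2
      linarith
    have hNs : ∀ j k, (M⁻¹ : Matrix (Fin N) (Fin N) ℝ) j k = M⁻¹ k j := by
      intro j k
      have h1 : Matrix.transpose M⁻¹ = M⁻¹ := by
        rw [Matrix.transpose_nonsing_inv]
        congr 1
        ext a b
        exact hMs b a
      calc (M⁻¹ : Matrix (Fin N) (Fin N) ℝ) j k = Matrix.transpose M⁻¹ k j := rfl
        _ = M⁻¹ k j := by rw [h1]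
    have hsplit : ∀ j, aForm ((φ - smulMat t M⁻¹) j) (η j)
        = aForm (φ j) (η j) - ∑ k, M⁻¹ k j * ⟪ι (φ k), ι (η j)⟫ := by
      intro j
      simp only [Pi.sub_apply, smulMat, map_sub, map_sum, map_smul, LinearMap.sub_apply,
        LinearMap.sum_apply, LinearMap.smul_apply, smul_eq_mul]
      congr 1
      refine Finset.sum_congr rfl fun k _ => ?_
      rw [haη]
    set S : ℝ := ∑ j, ∑ k, M⁻¹ k j * ⟪ι (φ k), ι (η j)⟫ with hS
    have hSzero : S = 0 := by
      have h1 : S = -S := by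
        calc S = ∑ k, ∑ j, M⁻¹ k j * ⟪ι (φ k), ι (η j)⟫ := Finset.sum_comm
          _ = ∑ j, ∑ k, M⁻¹ j k * ⟪ι (φ j), ι (η k)⟫ := rfl
          _ = ∑ j, ∑ k, M⁻¹ k j * (- ⟪ι (φ k), ι (η j)⟫) := by
              refine Finset.sum_congr rfl fun j _ => Finset.sum_congr rfl fun k _ => ?_
              rw [hNs, hBanti]
          _ = -S := by rw [hS]; simp [mul_neg, Finset.sum_neg_distrib]
      linarith
    calc (∑ j, aForm ((φ - smulMat t M⁻¹) j) (η j))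
        = ∑ j, (aForm (φ j) (η j) - ∑ k, M⁻¹ k j * ⟪ι (φ k), ι (η j)⟫) := by
          exact Finset.sum_congr rfl fun j _ => hsplit j
      _ = (∑ j, aForm (φ j) (η j)) - S := by rw [Finset.sum_sub_distrib, hS]
      _ = ∑ j, aForm (φ j) (η j) := by rw [hSzero, sub_zero]
  refine ⟨hdet, hpart2, hpart3, ?_⟩
  intro g htan' hgrad'
  set G : Fin N → V := φ - smulMat t M⁻¹ with hG
  set η : Fin N → V := g - G with hηdef
  have htanη : outerProdI ι η φ + outerProdI ι φ η = 0 := by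
    ext i j
    have h1 := congrFun (congrFun htan' i) j
    have h2 := congrFun (congrFun hpart2 i) j
    simp only [outerProdI, Matrix.add_apply, Matrix.of_apply, Matrix.zero_apply] at h1 h2 ⊢
    simp only [hηdef, Pi.sub_apply, map_sub, inner_sub_left, inner_sub_right]
    linarith
  have e1 := hgrad' η htanη
  have e2 := hpart3 η htanη
  have hsum : ∑ j, aForm (η j) (η j) = 0 := by
    have hstep : ∀ j, aForm (η j) (η j) = aForm (g j) (η j) - aForm (G j) (η j) := by
      intro j
      have hre : η j = g j - G j := rfl
      simp only [hre, map_sub, LinearMap.sub_apply]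
      ring
    rw [Finset.sum_congr rfl fun j _ => hstep j, Finset.sum_sub_distrib, e1, e2, sub_self]
  have hterm : ∀ j ∈ Finset.univ, (0:ℝ) ≤ aForm (η j) (η j) := by
    intro j _
    have := hcoer (η j)
    nlinarith [sq_nonneg ‖η j‖]
  have hz := (Finset.sum_eq_zero_iff_of_nonneg hterm).mp hsum
  funext j
  have hηj : η j = 0 := hzero _ (hz j (Finset.mem_univ j))
  have : g j - G j = 0 := hηj
  exact sub_eq_zero.mp this
end

section
/- Let Tφ := (T(ιφ_1), …, T(ιφ_N)) ∈ Ṽ^N and M := ⟦φ, Tφ⟧ (entries M_{ij} = ⟨ιφ_i, ι T(ιφ_j)⟩), which is invertible. Suppose φ is a critical point, i.e. φ = (Tφ)·M^{-1}, and set Λ := M^{-1}. Then Λ is symmetric, Λ_{ij} = ã(φ_i, φ_j) for all i, j (so ⟦φ, A_φ φ⟧ = ⟦φ, A_φ^{-1} φ⟧^{-1}), and φ solves the eigenvector equation A_φ φ = φ·Λ in weak form: for every j and every v ∈ Ṽ, ã(φ_j, v) = Σ_{k=1}^N Λ_{kj} · ⟨ι φ_k, ι v⟩_{H₀}. -/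
open scoped RealInnerProductSpace

/-- at a critical point `φ = (Tφ)·M⁻¹`, the matrix `Λ := M⁻¹` is symmetric
with entries `Λ_{ij} = ã(φ_i, φ_j)`, and `φ` solves the nonlinear eigenvector problem
`A_φ φ = φ Λ` in weak form: `ã(φ_j, v) = Σ_k Λ_{kj} ⟨ι φ_k, ι v⟩` for all `v`. -/
theorem critical_point_eigenvector_problem {N : ℕ} (hN : 1 ≤ N)
    {V H₀ : Type*}
    [NormedAddCommGroup V] [InnerProductSpace ℝ V] [CompleteSpace V]
    [NormedAddCommGroup H₀] [InnerProductSpace ℝ H₀] [CompleteSpace H₀]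
    (ι : V →L[ℝ] H₀) (hι : Function.Injective ι) (hdense : DenseRange ι)
    (aForm : V →ₗ[ℝ] V →ₗ[ℝ] ℝ)
    (hsymm : ∀ u w : V, aForm u w = aForm w u)
    (hcoer : ∃ α > 0, ∀ u : V, α * ‖u‖ ^ 2 ≤ aForm u u)
    (hbdd : ∃ β > 0, ∀ u w : V, |aForm u w| ≤ β * ‖u‖ * ‖w‖)
    (T : H₀ → V) (hT : ∀ (f : H₀) (w : V), aForm (T f) w = ⟪f, ι w⟫)
    (φ : Fin N → V) (hφ : outerProdI ι φ φ = 1)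
    (hcrit : φ = smulMat (Tphi (↑ι) T φ) (Mmat ι T φ)⁻¹) :
    IsUnit (Mmat ι T φ).det ∧
    ((Mmat ι T φ)⁻¹).IsSymm ∧
    (∀ i j : Fin N, (Mmat ι T φ)⁻¹ i j = aForm (φ i) (φ j)) ∧
    (∀ (j : Fin N) (v : V),
      aForm (φ j) v = ∑ k, (Mmat ι T φ)⁻¹ k j * ⟪ι (φ k), ι v⟫) := by
  have hφfun : ∀ j, φ j = ∑ i, (Mmat ι T φ)⁻¹ i j • T (ι (φ i)) := by
    intro j
    conv_lhs => rw [hcrit]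
    rfl
  have hweak : ∀ (j : Fin N) (v : V),
      aForm (φ j) v = ∑ k, (Mmat ι T φ)⁻¹ k j * ⟪ι (φ k), ι v⟫ := by
    intro j v
    rw [hφfun j]
    simp only [map_sum, map_smul, LinearMap.sum_apply, LinearMap.smul_apply,
      smul_eq_mul, hT]
  have hdet : IsUnit (Mmat ι T φ).det := by
    by_contra h
    have h0 : (Mmat ι T φ)⁻¹ = 0 := Matrix.nonsing_inv_apply_not_isUnit _ h
    have i0 : Fin N := ⟨0, hN⟩
    have hz : φ i0 = 0 := by rw [hφfun i0]; simp [h0]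
    have h1 : outerProdI ι φ φ i0 i0 = (1 : Matrix (Fin N) (Fin N) ℝ) i0 i0 := by
      rw [hφ]
    simp [outerProdI, hz, Matrix.one_apply] at h1
  have horth : ∀ k i : Fin N, ⟪ι (φ k), ι (φ i)⟫ = if k = i then (1:ℝ) else 0 := by
    intro k i
    have h1 : outerProdI ι φ φ k i = (1 : Matrix (Fin N) (Fin N) ℝ) k i := by rw [hφ]
    simpa [outerProdI, Matrix.one_apply] using h1
  have hentry : ∀ i j, (Mmat ι T φ)⁻¹ i j = aForm (φ i) (φ j) := by
    intro i j
    rw [hsymm, hweak j (φ i)]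
    simp [horth, Finset.sum_ite_eq']
  refine ⟨hdet, ?_, hentry, hweak⟩
  ext i j
  rw [Matrix.transpose_apply, hentry, hentry, hsymm]
end
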